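/- arXiv:1709.08552 — 2 statements merged into one kernel-verified Lean document; each statement's English description precedes it below -/
import Mathlib

section
/- Any projective representation (ℤ/2ℤ)³ → PGL₂(k) over an algebraically closed field of characteristic ≠ 2 has nontrivial kernel. -/
open Matrix

section Aux

variable {k : Type*} [Field k]

lemma prop_aux (a b c p q r : k)
    (hA : a^2 + b*c = 1) (hB : p^2 + q*r = 1)
    (m1 : b*r = q*c) (m2 : a*q = b*p) (m3 : a*r = c*p) :
    (p = a ∧ q = b ∧ r = c) ∨ (p = -a ∧ q = -b ∧ r = -c) := by
  by_cases ha : a = 0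
  · subst ha
    have hbc : b * c = 1 := by linear_combination hA
    have hb : b ≠ 0 := fun h => by simp [h] at hbc
    have hp : p = 0 := by
      rcases mul_eq_zero.mp (show b*p = 0 by linear_combination -m2) with h | h
      · exact absurd h hb
      · exact h
    subst hp
    have hqr : q * r = 1 := by linear_combination hB
    have hq2 : (q - b) * (q + b) = 0 := by
      linear_combination (-q^2)*hbc + b^2*hqr - b*q*m1
    rcases mul_eq_zero.mp hq2 with h | h
    · have hq : q = b := sub_eq_zero.mp h
      subst hq
      exact Or.inl ⟨by ring, rfl, mul_left_cancel₀ hb m1⟩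
    · have hq : q = -b := eq_neg_of_add_eq_zero_left h
      subst hq
      refine Or.inr ⟨by ring, rfl, mul_left_cancel₀ hb (by linear_combination m1)⟩
  · have h1 : a^2*(q*r) = (b*c)*p^2 := by linear_combination (a*r)*m2 + (b*p)*m3
    have hp2 : (p - a) * (p + a) = 0 := by linear_combination a^2*hB - p^2*hA - h1
    rcases mul_eq_zero.mp hp2 with h | h
    · have hp : p = a := sub_eq_zero.mp h
      subst hp
      refine Or.inl ⟨rfl, ?_, ?_⟩
      · exact mul_left_cancel₀ ha (by linear_combination m2)
      · exact mul_left_cancel₀ ha (by linear_combination m3)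
    · have hp : p = -a := eq_neg_of_add_eq_zero_left h
      subst hp
      refine Or.inr ⟨rfl, ?_, ?_⟩
      · exact mul_left_cancel₀ ha (by linear_combination m2)
      · exact mul_left_cancel₀ ha (by linear_combination m3)

lemma sq_one_scalar_or_trace (A : Matrix (Fin 2) (Fin 2) k) (h : A * A = 1) :
    (∃ s : k, A = s • 1) ∨ A 0 0 + A 1 1 = 0 := by
  by_cases ht : A 0 0 + A 1 1 = 0
  · exact Or.inr ht
  left
  have e : ∀ i j, (A*A) i j = (1 : Matrix (Fin 2) (Fin 2) k) i j := fun i j => by rw [h]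
  simp only [Matrix.mul_apply, Fin.sum_univ_two, Matrix.one_apply] at e
  have e00 := e 0 0; have e01 := e 0 1; have e10 := e 1 0; have e11 := e 1 1
  simp at e00 e01 e10 e11
  have hb : A 0 1 = 0 := by
    rcases mul_eq_zero.mp (show A 0 1 * (A 0 0 + A 1 1) = 0 by linear_combination e01) with h' | h'
    · exact h'
    · exact absurd h' ht
  have hc : A 1 0 = 0 := by
    rcases mul_eq_zero.mp (show A 1 0 * (A 0 0 + A 1 1) = 0 by linear_combination e10) with h' | h'
    · exact h'
    · exact absurd h' ht
  have had : A 0 0 = A 1 1 := by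
    rcases mul_eq_zero.mp (show (A 0 0 - A 1 1) * (A 0 0 + A 1 1) = 0 by
      linear_combination e00 - e11) with h' | h'
    · exact sub_eq_zero.mp h'
    · exact absurd h' ht
  refine ⟨A 0 0, ?_⟩
  ext i j
  fin_cases i <;> fin_cases j <;> simp [hb, hc, ← had]

lemma comm_pm (h2 : (2:k) ≠ 0) (A B : Matrix (Fin 2) (Fin 2) k)
    (hA : A * A = 1) (hB : B * B = 1)
    (tA : A 0 0 + A 1 1 = 0) (tB : B 0 0 + B 1 1 = 0)
    (hc : A * B = B * A) : B = A ∨ B = -A := by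
  have eA : ∀ i j, (A*A) i j = (1 : Matrix (Fin 2) (Fin 2) k) i j := fun i j => by rw [hA]
  have eB : ∀ i j, (B*B) i j = (1 : Matrix (Fin 2) (Fin 2) k) i j := fun i j => by rw [hB]
  have eC : ∀ i j, (A*B) i j = (B*A) i j := fun i j => by rw [hc]
  simp only [Matrix.mul_apply, Fin.sum_univ_two, Matrix.one_apply] at eA eB eC
  have eA00 := eA 0 0; have eB00 := eB 0 0
  have E00 := eC 0 0; have E01 := eC 0 1; have E10 := eC 1 0
  simp at eA00 eB00 E00 E01 E10
  have hA' : (A 0 0)^2 + A 0 1 * A 1 0 = 1 := by linear_combination eA00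
  have hB' : (B 0 0)^2 + B 0 1 * B 1 0 = 1 := by linear_combination eB00
  have m1 : A 0 1 * B 1 0 = B 0 1 * A 1 0 := by linear_combination E00
  have m2 : A 0 0 * B 0 1 = A 0 1 * B 0 0 :=
    mul_left_cancel₀ h2 (by linear_combination E01 - A 0 1 * tB + B 0 1 * tA)
  have m3 : A 0 0 * B 1 0 = A 1 0 * B 0 0 :=
    mul_left_cancel₀ h2 (by linear_combination -E10 + B 1 0 * tA - A 1 0 * tB)
  have hA11 : A 1 1 = -A 0 0 := eq_neg_of_add_eq_zero_right tA
  have hB11 : B 1 1 = -B 0 0 := eq_neg_of_add_eq_zero_right tB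
  rcases prop_aux (A 0 0) (A 0 1) (A 1 0) (B 0 0) (B 0 1) (B 1 0) hA' hB' m1 m2 m3 with
    ⟨h1, h2', h3⟩ | ⟨h1, h2', h3⟩
  · left
    ext i j
    fin_cases i <;> fin_cases j <;>
      simp [h1, h2', h3, hA11, hB11]
  · right
    ext i j
    fin_cases i <;> fin_cases j <;>
      simp [h1, h2', h3, hA11, hB11]

lemma mem_center_GL2 (M : GL (Fin 2) k) :
    M ∈ Subgroup.center (GL (Fin 2) k) ↔
      ∃ c : k, (M : Matrix (Fin 2) (Fin 2) k) = c • 1 := by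
  constructor
  · intro h
    have hU : (!![1,1;0,1] : Matrix (Fin 2) (Fin 2) k).det ≠ 0 := by
      simp [Matrix.det_fin_two_of]
    have hV : (!![1,0;1,1] : Matrix (Fin 2) (Fin 2) k).det ≠ 0 := by
      simp [Matrix.det_fin_two_of]
    set U := Matrix.GeneralLinearGroup.mkOfDetNeZero _ hU with hUdef
    set V := Matrix.GeneralLinearGroup.mkOfDetNeZero _ hV with hVdef
    have hUval : (U : Matrix (Fin 2) (Fin 2) k) = !![1,1;0,1] := rfl
    have hVval : (V : Matrix (Fin 2) (Fin 2) k) = !![1,0;1,1] := rfl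
    have h1 := congrArg Units.val (Subgroup.mem_center_iff.mp h U)
    have h2 := congrArg Units.val (Subgroup.mem_center_iff.mp h V)
    simp only [Units.val_mul, hUval, hVval] at h1 h2
    have e1 : ∀ i j, ((!![1,1;0,1] : Matrix (Fin 2) (Fin 2) k) * M) i j
        = (((M : Matrix (Fin 2) (Fin 2) k)) * (!![1,1;0,1] : Matrix (Fin 2) (Fin 2) k)) i j := fun i j => by rw [h1]
    have e2 : ∀ i j, ((!![1,0;1,1] : Matrix (Fin 2) (Fin 2) k) * M) i j
        = (((M : Matrix (Fin 2) (Fin 2) k)) * (!![1,0;1,1] : Matrix (Fin 2) (Fin 2) k)) i j := fun i j => by rw [h2]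
    simp only [Matrix.mul_apply, Fin.sum_univ_two] at e1 e2
    have a1 := e1 0 0; have a2 := e1 0 1
    have b1 := e2 0 0
    simp at a1 a2 b1
    refine ⟨(M : Matrix (Fin 2) (Fin 2) k) 0 0, ?_⟩
    have hc : (M : Matrix (Fin 2) (Fin 2) k) 1 0 = 0 := a1
    have hb : (M : Matrix (Fin 2) (Fin 2) k) 0 1 = 0 := b1
    have hd : (M : Matrix (Fin 2) (Fin 2) k) 1 1 = M.val 0 0 := by
      linear_combination a2
    ext i j
    fin_cases i <;> fin_cases j <;> simp [hb, hc, hd]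
  · rintro ⟨c, hc⟩
    refine Subgroup.mem_center_iff.mpr fun g => ?_
    ext
    simp only [Units.val_mul, hc, Matrix.smul_mul, Matrix.mul_smul, Matrix.one_mul, Matrix.mul_one]

lemma pi_eq_of_smul (A B : GL (Fin 2) k) (c : k)
    (h : (A : Matrix (Fin 2) (Fin 2) k) = c • (B : Matrix (Fin 2) (Fin 2) k)) :
    QuotientGroup.mk' (Subgroup.center (GL (Fin 2) k)) A
      = QuotientGroup.mk' (Subgroup.center (GL (Fin 2) k)) B := by
  have hc0 : c ≠ 0 := by
    rintro rfl
    rw [zero_smul] at h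
    have h1 := A.mul_inv
    rw [h, zero_mul] at h1
    exact one_ne_zero h1.symm
  apply (QuotientGroup.mk'_eq_mk' _).mpr
  refine ⟨A⁻¹ * B, (mem_center_GL2 _).mpr ⟨c⁻¹, ?_⟩, by group⟩
  have hB : (B : Matrix (Fin 2) (Fin 2) k) = c⁻¹ • (A : Matrix (Fin 2) (Fin 2) k) := by
    rw [h, smul_smul, inv_mul_cancel₀ hc0, one_smul]
  rw [Units.val_mul, hB, Matrix.mul_smul]
  congr 1
  exact A.inv_mul


lemma smul_of_pi_eq (A B : GL (Fin 2) k)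
    (h : QuotientGroup.mk' (Subgroup.center (GL (Fin 2) k)) A
      = QuotientGroup.mk' (Subgroup.center (GL (Fin 2) k)) B) :
    ∃ c : k, (B : Matrix (Fin 2) (Fin 2) k) = c • (A : Matrix (Fin 2) (Fin 2) k) := by
  obtain ⟨z, hz, hAz⟩ := (QuotientGroup.mk'_eq_mk' _).mp h
  obtain ⟨c, hc⟩ := (mem_center_GL2 z).mp hz
  exact ⟨c, by rw [← hAz, Units.val_mul, hc, Matrix.mul_smul, mul_one]⟩

lemma exists_lift [IsAlgClosed k]
    (x : GL (Fin 2) k ⧸ Subgroup.center (GL (Fin 2) k)) (hx : x * x = 1) (hx1 : x ≠ 1) :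
    ∃ A : GL (Fin 2) k, QuotientGroup.mk' (Subgroup.center (GL (Fin 2) k)) A = x ∧
      (A : Matrix (Fin 2) (Fin 2) k) * A = 1 ∧
      (A : Matrix (Fin 2) (Fin 2) k) 0 0 + (A : Matrix (Fin 2) (Fin 2) k) 1 1 = 0 := by
  obtain ⟨M, rfl⟩ := QuotientGroup.mk'_surjective (Subgroup.center (GL (Fin 2) k)) x
  have hM2 : M * M ∈ Subgroup.center (GL (Fin 2) k) := by
    rw [← QuotientGroup.ker_mk' (Subgroup.center (GL (Fin 2) k))]
    exact MonoidHom.mem_ker.mpr (by rw [_root_.map_mul]; exact hx)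
  obtain ⟨c, hc⟩ := (mem_center_GL2 _).mp hM2
  have hc' : (M : Matrix (Fin 2) (Fin 2) k) * M = c • 1 := by
    rw [← Units.val_mul]; exact hc
  have hdetM : ((M : Matrix (Fin 2) (Fin 2) k)).det ≠ 0 :=
    ((Matrix.isUnit_iff_isUnit_det _).mp M.isUnit).ne_zero
  have hcne : c ≠ 0 := by
    rintro rfl
    rw [zero_smul] at hc'
    have : ((M : Matrix (Fin 2) (Fin 2) k)).det * ((M : Matrix (Fin 2) (Fin 2) k)).det = 0 := by
      rw [← Matrix.det_mul, hc']
      exact Matrix.det_zero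
    exact hdetM (by rcases mul_eq_zero.mp this with h | h <;> exact h)
  obtain ⟨s, hs⟩ := IsAlgClosed.exists_pow_nat_eq c (n := 2) (by norm_num)
  have hsne : s ≠ 0 := by rintro rfl; rw [← hs] at hcne; simp at hcne
  set S : GL (Fin 2) k := ⟨s • 1, s⁻¹ • 1,
    by rw [Matrix.smul_mul, Matrix.mul_smul, one_mul, smul_smul, mul_inv_cancel₀ hsne, one_smul],
    by rw [Matrix.smul_mul, Matrix.mul_smul, one_mul, smul_smul, inv_mul_cancel₀ hsne, one_smul]⟩
    with hSdef
  have hSc : S ∈ Subgroup.center (GL (Fin 2) k) := (mem_center_GL2 S).mpr ⟨s, rfl⟩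
  have hSval : ((S⁻¹ * M : GL (Fin 2) k) : Matrix (Fin 2) (Fin 2) k)
      = s⁻¹ • (M : Matrix (Fin 2) (Fin 2) k) := by
    rw [Units.val_mul]
    show (s⁻¹ • 1) * (M : Matrix (Fin 2) (Fin 2) k) = _
    rw [Matrix.smul_mul, one_mul]
  have hpi : QuotientGroup.mk' (Subgroup.center (GL (Fin 2) k)) (S⁻¹ * M)
      = QuotientGroup.mk' (Subgroup.center (GL (Fin 2) k)) M := by
    have h1 : QuotientGroup.mk' (Subgroup.center (GL (Fin 2) k)) S = 1 := by
      rw [← QuotientGroup.ker_mk' (Subgroup.center (GL (Fin 2) k))] at hSc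
      exact hSc
    rw [_root_.map_mul, map_inv, h1, inv_one, one_mul]
  have hsq : ((S⁻¹ * M : GL (Fin 2) k) : Matrix (Fin 2) (Fin 2) k)
      * ((S⁻¹ * M : GL (Fin 2) k) : Matrix (Fin 2) (Fin 2) k) = 1 := by
    rw [hSval, Matrix.smul_mul, Matrix.mul_smul, hc', smul_smul, smul_smul]
    have hone : s⁻¹ * s⁻¹ * c = 1 := by
      field_simp
      linear_combination -hs
    rw [hone, one_smul]
  refine ⟨S⁻¹ * M, hpi, hsq, ?_⟩
  rcases sq_one_scalar_or_trace _ hsq with ⟨t, ht⟩ | htr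
  · exfalso
    apply hx1
    rw [← hpi]
    exact MonoidHom.mem_ker.mp
      (by rw [QuotientGroup.ker_mk']; exact (mem_center_GL2 _).mpr ⟨t, ht⟩)
  · exact htr

lemma anticomm_lemma (h2 : (2:k) ≠ 0) (A B : GL (Fin 2) k)
    (hA : (A : Matrix (Fin 2) (Fin 2) k) * A = 1)
    (hB : (B : Matrix (Fin 2) (Fin 2) k) * B = 1)
    (tA : (A : Matrix (Fin 2) (Fin 2) k) 0 0 + (A : Matrix (Fin 2) (Fin 2) k) 1 1 = 0)
    (tB : (B : Matrix (Fin 2) (Fin 2) k) 0 0 + (B : Matrix (Fin 2) (Fin 2) k) 1 1 = 0)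
    (hpi : QuotientGroup.mk' (Subgroup.center (GL (Fin 2) k)) (A * B)
      = QuotientGroup.mk' (Subgroup.center (GL (Fin 2) k)) (B * A))
    (hne : QuotientGroup.mk' (Subgroup.center (GL (Fin 2) k)) A
      ≠ QuotientGroup.mk' (Subgroup.center (GL (Fin 2) k)) B) :
    (A : Matrix (Fin 2) (Fin 2) k) * B = -((B : Matrix (Fin 2) (Fin 2) k) * A) := by
  obtain ⟨c, hc⟩ := smul_of_pi_eq _ _ hpi
  rw [Units.val_mul, Units.val_mul] at hc
  -- hc : B*A = c • (A*B)
  have hdet : ((A : Matrix (Fin 2) (Fin 2) k) * B).det ≠ 0 :=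
    ((Matrix.isUnit_iff_isUnit_det _).mp (A*B).isUnit).ne_zero
  have hd : ((B : Matrix (Fin 2) (Fin 2) k) * A).det
      = c^2 * ((A : Matrix (Fin 2) (Fin 2) k) * B).det := by
    rw [hc, Matrix.det_smul]
    norm_num
  have e1 : ((B : Matrix (Fin 2) (Fin 2) k) * A).det
      = ((A : Matrix (Fin 2) (Fin 2) k) * B).det := by
    rw [Matrix.det_mul, Matrix.det_mul, mul_comm]
  have key : (c^2 - 1) * ((A : Matrix (Fin 2) (Fin 2) k) * B).det = 0 := by
    linear_combination e1 - hd
  have hc2 : (c - 1) * (c + 1) = 0 := by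
    rcases mul_eq_zero.mp key with h | h
    · linear_combination h
    · exact absurd h hdet
  rcases mul_eq_zero.mp hc2 with h | h
  · exfalso
    have hcc : c = 1 := sub_eq_zero.mp h
    subst hcc
    rw [one_smul] at hc
    rcases comm_pm h2 (A : Matrix (Fin 2) (Fin 2) k) B hA hB tA tB hc.symm with h' | h'
    · exact hne (pi_eq_of_smul A B 1 (by rw [h', one_smul]))
    · exact hne (pi_eq_of_smul A B (-1) (by rw [h', neg_smul, one_smul, neg_neg]))
  · have hcc : c = -1 := eq_neg_of_add_eq_zero_left h
    subst hcc
    rw [hc, neg_smul, one_smul, neg_neg]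

end Aux

/-- `PGL₂(k) = GL₂(k)/center` (over a field the center of `GL₂` is `k*`). -/
def PGL2 (k : Type*) [Field k] :=
  GL (Fin 2) k ⧸ Subgroup.center (GL (Fin 2) k)

instance (k : Type*) [Field k] : Group (PGL2 k) :=
  inferInstanceAs (Group (GL (Fin 2) k ⧸ Subgroup.center (GL (Fin 2) k)))

/-- Any projective representation `(ℤ/2ℤ)³ → PGL₂(k)` over an algebraically closed
field of characteristic ≠ 2 has nontrivial kernel. -/
theorem stmt_4 (k : Type*) [Field k] [IsAlgClosed k] (hk : (2 : k) ≠ 0)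
    (f : Multiplicative (ZMod 2 × ZMod 2 × ZMod 2) →* PGL2 k) :
    f.ker ≠ ⊥ := by
  intro hker
  have hinj : Function.Injective f := (MonoidHom.ker_eq_bot_iff f).mp hker
  let f' : Multiplicative (ZMod 2 × ZMod 2 × ZMod 2)
      →* GL (Fin 2) k ⧸ Subgroup.center (GL (Fin 2) k) := f
  have hinj' : Function.Injective f' := hinj
  have hsq : ∀ g : Multiplicative (ZMod 2 × ZMod 2 × ZMod 2), g * g = 1 := by decide
  have sqf : ∀ g : Multiplicative (ZMod 2 × ZMod 2 × ZMod 2), f' g * f' g = 1 := fun g => by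
    rw [← _root_.map_mul, hsq g, _root_.map_one]
  have ne1 : ∀ g : Multiplicative (ZMod 2 × ZMod 2 × ZMod 2), g ≠ 1 → f' g ≠ 1 :=
    fun g hg h => hg (hinj' (h.trans (_root_.map_one f').symm))
  set g1 : Multiplicative (ZMod 2 × ZMod 2 × ZMod 2) := Multiplicative.ofAdd (1,0,0) with hg1
  set g2 : Multiplicative (ZMod 2 × ZMod 2 × ZMod 2) := Multiplicative.ofAdd (0,1,0) with hg2
  set g3 : Multiplicative (ZMod 2 × ZMod 2 × ZMod 2) := Multiplicative.ofAdd (0,0,1) with hg3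
  obtain ⟨A, hApi, hAsq, hAtr⟩ := exists_lift (f' g1) (sqf g1) (ne1 g1 (by decide))
  obtain ⟨B, hBpi, hBsq, hBtr⟩ := exists_lift (f' g2) (sqf g2) (ne1 g2 (by decide))
  obtain ⟨C, hCpi, hCsq, hCtr⟩ := exists_lift (f' g3) (sqf g3) (ne1 g3 (by decide))
  -- pairwise distinct images
  have hne : ∀ (X Y : GL (Fin 2) k) (gx gy : Multiplicative (ZMod 2 × ZMod 2 × ZMod 2)),
      QuotientGroup.mk' (Subgroup.center (GL (Fin 2) k)) X = f' gx →
      QuotientGroup.mk' (Subgroup.center (GL (Fin 2) k)) Y = f' gy → gx ≠ gy →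
      QuotientGroup.mk' (Subgroup.center (GL (Fin 2) k)) X
        ≠ QuotientGroup.mk' (Subgroup.center (GL (Fin 2) k)) Y := by
    intro X Y gx gy hX hY hxy h
    rw [hX, hY] at h
    exact hxy (hinj' h)
  have hpiAB : QuotientGroup.mk' (Subgroup.center (GL (Fin 2) k)) (A * B)
      = QuotientGroup.mk' (Subgroup.center (GL (Fin 2) k)) (B * A) := by
    rw [_root_.map_mul, _root_.map_mul, hApi, hBpi, ← _root_.map_mul f' g1 g2, ← _root_.map_mul f' g2 g1, mul_comm g1 g2]
  have hpiAC : QuotientGroup.mk' (Subgroup.center (GL (Fin 2) k)) (A * C)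
      = QuotientGroup.mk' (Subgroup.center (GL (Fin 2) k)) (C * A) := by
    rw [_root_.map_mul, _root_.map_mul, hApi, hCpi, ← _root_.map_mul f' g1 g3, ← _root_.map_mul f' g3 g1, mul_comm g1 g3]
  have hpiBC : QuotientGroup.mk' (Subgroup.center (GL (Fin 2) k)) (B * C)
      = QuotientGroup.mk' (Subgroup.center (GL (Fin 2) k)) (C * B) := by
    rw [_root_.map_mul, _root_.map_mul, hBpi, hCpi, ← _root_.map_mul f' g2 g3, ← _root_.map_mul f' g3 g2, mul_comm g2 g3]
  have hAB := anticomm_lemma hk A B hAsq hBsq hAtr hBtr hpiAB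
    (hne A B g1 g2 hApi hBpi (by decide))
  have hAC := anticomm_lemma hk A C hAsq hCsq hAtr hCtr hpiAC
    (hne A C g1 g3 hApi hCpi (by decide))
  have hBC := anticomm_lemma hk B C hBsq hCsq hBtr hCtr hpiBC
    (hne B C g2 g3 hBpi hCpi (by decide))
  set M : Matrix (Fin 2) (Fin 2) k := (A : Matrix (Fin 2) (Fin 2) k) with hM
  set N : Matrix (Fin 2) (Fin 2) k := (B : Matrix (Fin 2) (Fin 2) k) with hN
  set P : Matrix (Fin 2) (Fin 2) k := (C : Matrix (Fin 2) (Fin 2) k) with hP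
  -- P commutes with M*N
  have hNM : N * M = -(M * N) := by rw [hAB, neg_neg]
  have hPM : P * M = -(M * P) := by rw [hAC, neg_neg]
  have hPN : P * N = -(N * P) := by rw [hBC, neg_neg]
  have hcommD : (M * N) * P = P * (M * N) := by
    calc (M * N) * P = M * (N * P) := by rw [mul_assoc]
      _ = M * (-(P * N)) := by rw [hPN, neg_neg]
      _ = -((M * P) * N) := by rw [mul_neg, mul_assoc]
      _ = -((-(P * M)) * N) := by rw [hPM, neg_neg]
      _ = (P * M) * N := by rw [neg_mul, neg_neg]
      _ = P * (M * N) := by rw [mul_assoc]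
  have hsqMN : (M * N) * (M * N) = -1 := by
    calc (M * N) * (M * N) = M * ((N * M) * N) := by rw [mul_assoc, ← mul_assoc N M N]
      _ = M * ((-(M * N)) * N) := by rw [hNM]
      _ = -((M * M) * (N * N)) := by
          simp only [neg_mul, mul_neg, mul_assoc]
      _ = -1 := by rw [hAsq, hBsq, one_mul]
  obtain ⟨i, hi⟩ := IsAlgClosed.exists_pow_nat_eq (-1 : k) (n := 2) (by norm_num)
  have hine : i ≠ 0 := by
    rintro rfl
    exact one_ne_zero (α := k) (by linear_combination hi)
  have hii : i * i = -1 := by rw [← sq]; exact hi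
  set D : Matrix (Fin 2) (Fin 2) k := i • (M * N) with hD
  have hDsq : D * D = 1 := by
    rw [hD, Matrix.smul_mul, Matrix.mul_smul, smul_smul, hsqMN, hii, neg_smul, smul_neg,
      neg_neg, one_smul]
  have hDcomm : D * P = P * D := by
    rw [hD, Matrix.smul_mul, Matrix.mul_smul, hcommD]
  -- (A*B) is a lift of f' (g1*g2)
  have hABpi : QuotientGroup.mk' (Subgroup.center (GL (Fin 2) k)) (A * B) = f' (g1 * g2) := by
    rw [_root_.map_mul, _root_.map_mul, hApi, hBpi]
  have hABval : ((A * B : GL (Fin 2) k) : Matrix (Fin 2) (Fin 2) k) = M * N := Units.val_mul A B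
  have hDtr : D 0 0 + D 1 1 = 0 := by
    rcases sq_one_scalar_or_trace D hDsq with ⟨t, ht⟩ | htr
    · exfalso
      apply ne1 (g1 * g2) (by decide)
      rw [← hABpi]
      have hMN : ((A * B : GL (Fin 2) k) : Matrix (Fin 2) (Fin 2) k)
          = (i⁻¹ * t) • ((1 : GL (Fin 2) k) : Matrix (Fin 2) (Fin 2) k) := by
        rw [hABval, Units.val_one]
        rw [hD] at ht
        rw [show M * N = i⁻¹ • (t • (1 : Matrix (Fin 2) (Fin 2) k)) from by
          rw [← ht, smul_smul, inv_mul_cancel₀ hine, one_smul], smul_smul]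
      rw [pi_eq_of_smul (A * B) 1 (i⁻¹ * t) hMN, _root_.map_one]
    · exact htr
  rcases comm_pm hk D P hDsq hCsq hDtr hCtr hDcomm with h' | h'
  · -- P = D = i • (M*N)
    have : ((C : GL (Fin 2) k) : Matrix (Fin 2) (Fin 2) k)
        = i • ((A * B : GL (Fin 2) k) : Matrix (Fin 2) (Fin 2) k) := by
      rw [hABval]; exact h'
    have heq := pi_eq_of_smul C (A * B) i this
    rw [hCpi, hABpi] at heq
    exact (by decide : g3 ≠ g1 * g2) (hinj' heq)
  · have : ((C : GL (Fin 2) k) : Matrix (Fin 2) (Fin 2) k)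
        = (-i) • ((A * B : GL (Fin 2) k) : Matrix (Fin 2) (Fin 2) k) := by
      rw [hABval, neg_smul]; exact h'
    have heq := pi_eq_of_smul C (A * B) (-i) this
    rw [hCpi, hABpi] at heq
    exact (by decide : g3 ≠ g1 * g2) (hinj' heq)
end

section
/- Let k be a field of characteristic ≠ 2 and a, b ∈ k*. The quaternion algebra (a,b)_k is split (isomorphic to the 2×2 matrix algebra) if and only if the conic a u² + b v² = w² in ℙ²_k has a k-rational point. -/
open Matrix

set_option maxHeartbeats 1000000 in
theorem split_of_rep (k : Type*) [Field k] (hk : (2 : k) ≠ 0) (a b : k) (ha : a ≠ 0)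
    (hb : b ≠ 0) (p q : k) (hpq : p ^ 2 - a * q ^ 2 = b) :
    Nonempty (QuaternionAlgebra k a 0 b ≃ₐ[k] Matrix (Fin 2) (Fin 2) k) := by
  have hden : p ^ 2 - a * q ^ 2 ≠ 0 := by rw [hpq]; exact hb
  -- helper rewriting lemmas, elaborated in this context
  have addLit : ∀ x y z w x' y' z' w' : k,
      (!![x, y; z, w] : Matrix (Fin 2) (Fin 2) k) + !![x', y'; z', w']
        = !![x + x', y + y'; z + z', w + w'] := by
    intro x y z w x' y' z' w'
    ext i j
    fin_cases i <;> fin_cases j <;> simp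
  have smulLit : ∀ c x y z w : k,
      c • (!![x, y; z, w] : Matrix (Fin 2) (Fin 2) k) = !![c * x, c * y; c * z, c * w] := by
    intro c x y z w
    ext i j
    fin_cases i <;> fin_cases j <;> simp
  have algLit : ∀ c : k,
      algebraMap k (Matrix (Fin 2) (Fin 2) k) c = !![c, 0; 0, c] := by
    intro c
    ext i j
    fin_cases i <;> fin_cases j <;> simp [Matrix.algebraMap_matrix_apply]
  -- the quaternionic basis of M₂(k)
  have hII : (!![0, 1; a, 0] : Matrix (Fin 2) (Fin 2) k) * !![0, 1; a, 0] = a • 1 := by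
    have h11 : (0 : k) * 0 + 1 * a = a := by ring
    have h12 : (0 : k) * 1 + 1 * 0 = 0 := by ring
    have h21 : a * 0 + (0 : k) * a = 0 := by ring
    have h22 : a * 1 + (0 : k) * 0 = a := by ring
    rw [Matrix.mul_fin_two, h11, h12, h21, h22, Matrix.smul_one_eq_diagonal]
    ext i j
    fin_cases i <;> fin_cases j <;> simp
  have hJJ : (!![p, q; -(a * q), -p] : Matrix (Fin 2) (Fin 2) k) * !![p, q; -(a * q), -p]
      = b • 1 := by
    have h11 : p * p + q * -(a * q) = b := by linear_combination hpq
    have h12 : p * q + q * -p = 0 := by ring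
    have h21 : -(a * q) * p + -p * -(a * q) = 0 := by ring
    have h22 : -(a * q) * q + -p * -p = b := by linear_combination hpq
    rw [Matrix.mul_fin_two, h11, h12, h21, h22, Matrix.smul_one_eq_diagonal]
    ext i j
    fin_cases i <;> fin_cases j <;> simp
  have hIJ : (!![0, 1; a, 0] : Matrix (Fin 2) (Fin 2) k) * !![p, q; -(a * q), -p]
      = !![-(a * q), -p; a * p, a * q] := by
    have h11 : (0 : k) * p + 1 * -(a * q) = -(a * q) := by ring
    have h12 : (0 : k) * q + 1 * -p = -p := by ring
    have h21 : a * p + (0 : k) * -(a * q) = a * p := by ring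
    have h22 : a * q + (0 : k) * -p = a * q := by ring
    rw [Matrix.mul_fin_two, h11, h12, h21, h22]
  have hJI : (!![p, q; -(a * q), -p] : Matrix (Fin 2) (Fin 2) k) * !![0, 1; a, 0]
      = -(!![-(a * q), -p; a * p, a * q]) := by
    have h11 : p * 0 + q * a = a * q := by ring
    have h12 : p * 1 + q * 0 = p := by ring
    have h21 : -(a * q) * 0 + -p * a = -(a * p) := by ring
    have h22 : -(a * q) * 1 + -p * 0 = -(a * q) := by ring
    rw [Matrix.mul_fin_two, h11, h12, h21, h22]
    ext i j
    fin_cases i <;> fin_cases j <;> simp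
  let B : QuaternionAlgebra.Basis (Matrix (Fin 2) (Fin 2) k) a 0 b :=
    { i := !![0, 1; a, 0]
      j := !![p, q; -(a * q), -p]
      k := !![-(a * q), -p; a * p, a * q]
      i_mul_i := by rw [hII]; simp
      j_mul_j := hJJ
      i_mul_j := hIJ
      j_mul_i := by rw [hJI]; simp }
  let f : QuaternionAlgebra k a 0 b →ₐ[k] Matrix (Fin 2) (Fin 2) k := B.liftHom
  have hf : ∀ x : QuaternionAlgebra k a 0 b,
      f x = algebraMap k (Matrix (Fin 2) (Fin 2) k) x.re + x.imI • !![0, 1; a, 0]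
        + x.imJ • !![p, q; -(a * q), -p] + x.imK • !![-(a * q), -p; a * p, a * q] :=
    fun _ => rfl
  have hcalc : ∀ x : QuaternionAlgebra k a 0 b, f x =
      !![x.re + p * x.imJ - a * q * x.imK, x.imI + q * x.imJ - p * x.imK;
         a * x.imI - a * q * x.imJ + a * p * x.imK, x.re - p * x.imJ + a * q * x.imK] := by
    intro x
    rw [hf x, algLit, smulLit, smulLit, smulLit, addLit, addLit, addLit]
    ext i j
    fin_cases i <;> fin_cases j <;> simp <;> ring
  have hsurj : Function.Surjective f := by
    intro m
    refine ⟨⟨(m 0 0 + m 1 1) / 2, (a * m 0 1 + m 1 0) / (2 * a),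
      (p * (m 0 0 - m 1 1) - q * (a * m 0 1 - m 1 0)) / (2 * (p ^ 2 - a * q ^ 2)),
      (a * q * (m 0 0 - m 1 1) - p * (a * m 0 1 - m 1 0)) / (2 * a * (p ^ 2 - a * q ^ 2))⟩, ?_⟩
    rw [hcalc, Matrix.eta_fin_two m]
    ext i j
    fin_cases i <;> fin_cases j <;>
      · simp only [Matrix.cons_val', Matrix.cons_val_zero, Matrix.cons_val_one,
          Matrix.head_cons, Matrix.empty_val', Matrix.cons_val_fin_one, Matrix.head_fin_const,
          Fin.zero_eta, Fin.mk_one, Matrix.of_apply]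
        field_simp [hden, ha, hk, show p ^ 2 - q ^ 2 * a ≠ 0 by rwa [mul_comm]]
        ring
  have hfin : Module.finrank k (QuaternionAlgebra k a 0 b)
      = Module.finrank k (Matrix (Fin 2) (Fin 2) k) := by
    rw [QuaternionAlgebra.finrank_eq_four, Module.finrank_matrix]
    simp
  have hinj : Function.Injective f :=
    (LinearMap.injective_iff_surjective_of_finrank_eq_finrank (f := f.toLinearMap) hfin).mpr hsurj
  exact ⟨AlgEquiv.ofBijective f ⟨hinj, hsurj⟩⟩

/-- For a field `k` of characteristic ≠ 2 and `a, b ∈ k*`, the quaternion algebra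
`(a,b)_k` is split (isomorphic to `M₂(k)`) iff the conic `a u² + b v² = w²` has a
`k`-rational point. -/
theorem stmt_10 (k : Type*) [Field k] (hk : (2 : k) ≠ 0) (a b : k) (ha : a ≠ 0) (hb : b ≠ 0) :
    Nonempty (QuaternionAlgebra k a 0 b ≃ₐ[k] Matrix (Fin 2) (Fin 2) k) ↔
      ∃ u v w : k, (u, v, w) ≠ (0, 0, 0) ∧ a * u ^ 2 + b * v ^ 2 = w ^ 2 := by
  constructor
  · rintro ⟨e⟩
    set N : Matrix (Fin 2) (Fin 2) k := !![0, 1; 0, 0] with hN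
    set x := e.symm N with hx
    have hxne : x ≠ 0 := by
      intro h
      have hN0 : N = 0 := by
        have := congrArg e h
        simpa [hx] using this
      have h1 : (1 : k) = 0 := by
        have := congrFun (congrFun hN0 0) 1
        simpa [hN] using this
      exact one_ne_zero h1
    have hNsq : N * N = 0 := by
      rw [hN, Matrix.mul_fin_two]
      ext i j
      fin_cases i <;> fin_cases j <;> simp
    have hxsq : x * x = 0 := by
      have h1 : e (x * x) = 0 := by
        rw [_root_.map_mul]
        simp [hx, hNsq]
      have := congrArg e.symm h1
      simpa using this
    have hre : x.re * x.re + a * x.imI * x.imI + b * x.imJ * x.imJ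
        - a * b * x.imK * x.imK = 0 := by
      have := congrArg QuaternionAlgebra.re hxsq
      simpa [QuaternionAlgebra.re_mul] using this
    have hI : x.re * x.imI + x.imI * x.re - b * x.imJ * x.imK + b * x.imK * x.imJ = 0 := by
      have := congrArg QuaternionAlgebra.imI hxsq
      simpa [QuaternionAlgebra.imI_mul] using this
    have hJ : x.re * x.imJ + a * x.imI * x.imK + x.imJ * x.re - a * x.imK * x.imI = 0 := by
      have := congrArg QuaternionAlgebra.imJ hxsq
      simpa [QuaternionAlgebra.imJ_mul] using this
    have hK : x.re * x.imK + x.imI * x.imJ - x.imJ * x.imI + x.imK * x.re = 0 := by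
      have := congrArg QuaternionAlgebra.imK hxsq
      simpa [QuaternionAlgebra.imK_mul] using this
    have hre0 : x.re = 0 := by
      by_contra h
      have hI0 : x.imI = 0 := by
        have h2 : (2 * x.re) * x.imI = 0 := by linear_combination hI
        rcases mul_eq_zero.mp h2 with h' | h'
        · exact absurd h' (mul_ne_zero hk h)
        · exact h'
      have hJ0 : x.imJ = 0 := by
        have h2 : (2 * x.re) * x.imJ = 0 := by linear_combination hJ
        rcases mul_eq_zero.mp h2 with h' | h'
        · exact absurd h' (mul_ne_zero hk h)
        · exact h'
      have hK0 : x.imK = 0 := by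
        have h2 : (2 * x.re) * x.imK = 0 := by linear_combination hK
        rcases mul_eq_zero.mp h2 with h' | h'
        · exact absurd h' (mul_ne_zero hk h)
        · exact h'
      have hrr : x.re * x.re = 0 := by
        rw [hI0, hJ0, hK0] at hre
        linear_combination hre
      exact h (mul_self_eq_zero.mp hrr)
    have him : ¬(x.imI = 0 ∧ x.imJ = 0 ∧ x.imK = 0) := by
      rintro ⟨h1, h2, h3⟩
      apply hxne
      ext <;> simp [hre0, h1, h2, h3]
    refine ⟨b * x.imJ, a * x.imI, a * b * x.imK, ?_, ?_⟩
    · intro h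
      rw [Prod.ext_iff, Prod.ext_iff] at h
      obtain ⟨h1, h2, h3⟩ := h
      simp only at h1 h2 h3
      exact him ⟨by
        rcases mul_eq_zero.mp h2 with h' | h'
        · exact absurd h' ha
        · exact h', by
        rcases mul_eq_zero.mp h1 with h' | h'
        · exact absurd h' hb
        · exact h', by
        rcases mul_eq_zero.mp h3 with h' | h'
        · exact absurd (mul_eq_zero.mp h' |>.resolve_left ha) hb
        · exact h'⟩
    · rw [hre0] at hre
      linear_combination a * b * hre
  · rintro ⟨u, v, w, hnz, hconic⟩
    by_cases hv : v = 0
    · rw [hv] at hconic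
      have hu : u ≠ 0 := by
        intro h
        rw [h] at hconic
        have hw : w = 0 := by
          have hw2 : w ^ 2 = 0 := by linear_combination -hconic
          exact pow_eq_zero_iff (n := 2) (by norm_num) |>.mp hw2
        exact hnz (by simp [h, hv, hw])
      have hαsq : (w / u) ^ 2 = a := by
        field_simp
        linear_combination -hconic
      have hα0 : w / u ≠ 0 := by
        intro h
        rw [h] at hαsq
        exact ha (by linear_combination -hαsq)
      have hw : w ≠ 0 := by
        intro h
        rw [h] at hαsq
        simp [hu] at hαsq
        exact ha hαsq.symm
      have ha2 : a * u ^ 2 = w ^ 2 := by linear_combination hconic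
      exact split_of_rep k hk a b ha hb ((b + 1) / 2) ((b - 1) * u / (2 * w))
        (by
          field_simp
          first
          | linear_combination (b - 1) ^ 2 * ha2
          | linear_combination -(b - 1) ^ 2 * ha2
          | linear_combination 2 * (b - 1) ^ 2 * ha2
          | linear_combination -2 * (b - 1) ^ 2 * ha2
          | linear_combination 4 * (b - 1) ^ 2 * ha2
          | linear_combination -4 * (b - 1) ^ 2 * ha2)
    · exact split_of_rep k hk a b ha hb (w / v) (u / v)
        (by
          field_simp
          first
          | linear_combination hconic
          | linear_combination -hconic)
end
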